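/- A finite abelian 2-group G of rank at most 2 is the group of units of some ring of characteristic 2 if and only if G is isomorphic to one of the following groups: the trivial group, C_2, C_4, C_2 × C_2, C_4 × C_2, C_4 × C_4, or C_8 × C_2. -/

import Mathlib

set_option maxHeartbeats 8000000

namespace Fc2


def spread (x : ℕ) : ℕ :=
  (x &&& 1) ||| ((x &&& 2) <<< 3) ||| ((x &&& 4) <<< 6) ||| ((x &&& 8) <<< 9) ||| ((x &&& 16) <<< 12)

def unspread (y : ℕ) : ℕ :=
  (y &&& 1) ||| ((y >>> 3) &&& 2) ||| ((y >>> 6) &&& 4) ||| ((y >>> 9) &&& 8) ||| ((y >>> 12) &&& 16)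

/-- multiplication of `F₂[x]/xⁿ` on bit vectors -/
def nmul (n a b : ℕ) : ℕ :=
  unspread ((spread a * spread b) &&& ((16 ^ n - 1) / 15)) % 2 ^ n

def nadd (n a b : ℕ) : ℕ := (a ^^^ b) % 2 ^ n

def forallLt (k : ℕ) (f : ℕ → Bool) : Bool :=
  Nat.rec true (fun i acc => acc && f i) k

theorem forallLt_spec {f : ℕ → Bool} : ∀ {k : ℕ}, forallLt k f = true → ∀ i, i < k → f i = true := by
  intro k
  induction k with
  | zero => intro _ i hi; omega
  | succ k ih =>
    intro h i hi
    have h' : (forallLt k f && f k) = true := h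
    rcases Bool.and_eq_true_iff.mp h' with ⟨h1, h2⟩
    rcases Nat.lt_succ_iff_lt_or_eq.mp hi with h3 | h3
    · exact ih h1 i h3
    · subst h3; exact h2

structure Rq (n : ℕ) : Type where
  val : Fin (2 ^ n)
deriving DecidableEq

instance RqFintype (n : ℕ) : Fintype (Rq n) :=
  Fintype.ofBijective (fun i : Fin (2 ^ n) => Rq.mk i)
    ⟨fun a b h => by cases h; rfl, fun r => ⟨r.val, rfl⟩⟩

theorem two_pow_pos (n : ℕ) : 0 < 2 ^ n := Nat.pow_pos (by norm_num)

def Rq.mul {n : ℕ} (a b : Rq n) : Rq n := ⟨⟨nmul n a.val.val b.val.val, Nat.mod_lt _ (two_pow_pos n)⟩⟩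
def Rq.add {n : ℕ} (a b : Rq n) : Rq n := ⟨⟨nadd n a.val.val b.val.val, Nat.mod_lt _ (two_pow_pos n)⟩⟩
def Rq.zero (n : ℕ) : Rq n := ⟨⟨0, two_pow_pos n⟩⟩
def Rq.one (n : ℕ) : Rq n := ⟨⟨1 % 2 ^ n, Nat.mod_lt _ (two_pow_pos n)⟩⟩

/-- test a bounded 3-variable identity -/
def chk3 (n : ℕ) (f g : ℕ → ℕ → ℕ → ℕ) : Bool :=
  forallLt (2^n) fun a => forallLt (2^n) fun b => forallLt (2^n) fun c => decide (f a b c = g a b c)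

def chk2 (n : ℕ) (f g : ℕ → ℕ → ℕ) : Bool :=
  forallLt (2^n) fun a => forallLt (2^n) fun b => decide (f a b = g a b)

def chk1 (n : ℕ) (f g : ℕ → ℕ) : Bool :=
  forallLt (2^n) fun a => decide (f a = g a)

theorem chk3_spec {n : ℕ} {f g : ℕ → ℕ → ℕ → ℕ} (h : chk3 n f g = true) :
    ∀ a b c : Rq n, f a.val.val b.val.val c.val.val = g a.val.val b.val.val c.val.val := by
  intro a b c
  have h1 := forallLt_spec h a.val.val a.val.isLt
  have h2 := forallLt_spec h1 b.val.val b.val.isLt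
  have h3 := forallLt_spec h2 c.val.val c.val.isLt
  exact of_decide_eq_true h3

theorem chk2_spec {n : ℕ} {f g : ℕ → ℕ → ℕ} (h : chk2 n f g = true) :
    ∀ a b : Rq n, f a.val.val b.val.val = g a.val.val b.val.val := by
  intro a b
  have h1 := forallLt_spec h a.val.val a.val.isLt
  have h2 := forallLt_spec h1 b.val.val b.val.isLt
  exact of_decide_eq_true h2

theorem chk1_spec {n : ℕ} {f g : ℕ → ℕ} (h : chk1 n f g = true) :
    ∀ a : Rq n, f a.val.val = g a.val.val := by
  intro a
  exact of_decide_eq_true (forallLt_spec h a.val.val a.val.isLt)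

theorem Rq.ext' {n : ℕ} {a b : Rq n} (h : a.val.val = b.val.val) : a = b := by
  cases a with
  | mk av => cases b with
    | mk bv => cases av; cases bv; simp only [Rq.mk.injEq, Fin.mk.injEq]; exact h

instance (n : ℕ) : Zero (Rq n) := ⟨Rq.zero n⟩
instance (n : ℕ) : Add (Rq n) := ⟨Rq.add⟩
instance (n : ℕ) : Neg (Rq n) := ⟨fun a => a⟩
instance (n : ℕ) : Mul (Rq n) := ⟨Rq.mul⟩
instance (n : ℕ) : One (Rq n) := ⟨Rq.one n⟩

/-- Build a `CommRing` structure on `Rq n` from boolean checks. -/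
def mkCR (n : ℕ)
    (haa : chk3 n (fun a b c => nadd n (nadd n a b) c) (fun a b c => nadd n a (nadd n b c)) = true)
    (hac : chk2 n (fun a b => nadd n a b) (fun a b => nadd n b a) = true)
    (hza : chk1 n (fun a => nadd n 0 a) (fun a => a) = true)
    (hnc : chk1 n (fun a => nadd n a a) (fun _ => 0) = true)
    (hma : chk3 n (fun a b c => nmul n (nmul n a b) c) (fun a b c => nmul n a (nmul n b c)) = true)
    (hmc : chk2 n (fun a b => nmul n a b) (fun a b => nmul n b a) = true)
    (hom : chk1 n (fun a => nmul n (1 % 2 ^ n) a) (fun a => a) = true)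
    (hld : chk3 n (fun a b c => nmul n a (nadd n b c)) (fun a b c => nadd n (nmul n a b) (nmul n a c)) = true)
    (hzm : chk1 n (fun a => nmul n 0 a) (fun _ => 0) = true) :
    CommRing (Rq n) where
  add := (· + ·)
  nsmul := nsmulRec
  zsmul := zsmulRec
  add_assoc a b c := Rq.ext' (chk3_spec haa a b c)
  zero := 0
  zero_add a := Rq.ext' (chk1_spec hza a)
  add_zero a := by
    have h : Rq.add a (Rq.zero n) = Rq.add (Rq.zero n) a := Rq.ext' (chk2_spec hac a (Rq.zero n))
    exact h.trans (Rq.ext' (chk1_spec hza a))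
  add_comm a b := Rq.ext' (chk2_spec hac a b)
  neg := (- ·)
  neg_add_cancel a := Rq.ext' (chk1_spec hnc a)
  mul := (· * ·)
  mul_assoc a b c := Rq.ext' (chk3_spec hma a b c)
  one := 1
  one_mul a := Rq.ext' (chk1_spec hom a)
  mul_one a := by
    have h : Rq.mul a (Rq.one n) = Rq.mul (Rq.one n) a := Rq.ext' (chk2_spec hmc a (Rq.one n))
    exact h.trans (Rq.ext' (chk1_spec hom a))
  left_distrib a b c := Rq.ext' (chk3_spec hld a b c)
  right_distrib a b c := Rq.ext' (by
    calc nmul n (nadd n a.val.val b.val.val) c.val.val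
        = nmul n c.val.val (Rq.add a b).val.val := chk2_spec hmc (Rq.add a b) c
      _ = nadd n (nmul n c.val.val a.val.val) (nmul n c.val.val b.val.val) := chk3_spec hld c a b
      _ = nadd n (nmul n a.val.val c.val.val) (nmul n b.val.val c.val.val) := by
          rw [chk2_spec hmc c a, chk2_spec hmc c b])
  zero_mul a := Rq.ext' (chk1_spec hzm a)
  mul_zero a := by
    have h : Rq.mul a (Rq.zero n) = Rq.mul (Rq.zero n) a := Rq.ext' (chk2_spec hmc a (Rq.zero n))
    exact h.trans (Rq.ext' (chk1_spec hzm a))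
  mul_comm a b := Rq.ext' (chk2_spec hmc a b)

instance cr1 : CommRing (Rq 1) :=
  mkCR 1 (by decide) (by decide) (by decide) (by decide) (by decide) (by decide) (by decide)
    (by decide) (by decide)

instance cr2 : CommRing (Rq 2) :=
  mkCR 2 (by decide) (by decide) (by decide) (by decide) (by decide) (by decide) (by decide)
    (by decide) (by decide)

instance cr3 : CommRing (Rq 3) :=
  mkCR 3 (by decide) (by decide) (by decide) (by decide) (by decide) (by decide) (by decide)
    (by decide) (by decide)

instance cr5 : CommRing (Rq 5) :=
  mkCR 5 (by decide) (by decide) (by decide) (by decide) (by decide) (by decide) (by decide)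
    (by decide) (by decide)


def el (n v : ℕ) (h : v < 2 ^ n) : Rq n := ⟨⟨v, h⟩⟩

def U2 : (Rq 2)ˣ := ⟨el 2 3 (by norm_num), el 2 3 (by norm_num), by decide, by decide⟩
def U3 : (Rq 3)ˣ := ⟨el 3 3 (by norm_num), el 3 7 (by norm_num), by decide, by decide⟩
def U5 : (Rq 5)ˣ := ⟨el 5 3 (by norm_num), el 5 31 (by norm_num), by decide, by decide⟩
def T5 : (Rq 5)ˣ := ⟨el 5 9 (by norm_num), el 5 9 (by norm_num), by decide, by decide⟩

def f1 : Multiplicative (ZMod 1) →* (Rq 1)ˣ :=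
  { toFun := fun _ => 1, map_one' := rfl, map_mul' := fun _ _ => (one_mul 1).symm }

def f2 : Multiplicative (ZMod 2) →* (Rq 2)ˣ :=
  { toFun := fun p => U2 ^ (Multiplicative.toAdd p).val,
    map_one' := by decide, map_mul' := by decide }

def f3 : Multiplicative (ZMod 4) →* (Rq 3)ˣ :=
  { toFun := fun p => U3 ^ (Multiplicative.toAdd p).val,
    map_one' := by decide, map_mul' := by decide }

def f5 : Multiplicative (ZMod 8) × Multiplicative (ZMod 2) →* (Rq 5)ˣ :=
  { toFun := fun p => U5 ^ (Multiplicative.toAdd p.1).val * T5 ^ (Multiplicative.toAdd p.2).val,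
    map_one' := by decide, map_mul' := by decide }

noncomputable def e1 : (Rq 1)ˣ ≃* Multiplicative (ZMod 1) :=
  (MulEquiv.ofBijective f1 (by decide)).symm
noncomputable def e2 : (Rq 2)ˣ ≃* Multiplicative (ZMod 2) :=
  (MulEquiv.ofBijective f2 (by decide)).symm
noncomputable def e3 : (Rq 3)ˣ ≃* Multiplicative (ZMod 4) :=
  (MulEquiv.ofBijective f3 (by decide)).symm
noncomputable def e5 : (Rq 5)ˣ ≃* Multiplicative (ZMod 8) × Multiplicative (ZMod 2) :=
  (MulEquiv.ofBijective f5 (by decide)).symm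

theorem charP_two {R : Type} [Ring R] (h2 : (2 : R) = 0) (h1 : (1 : R) ≠ 0) : CharP R 2 := by
  constructor
  intro a
  rcases Nat.even_or_odd a with ⟨k, hk⟩ | ⟨k, hk⟩
  · subst hk
    constructor
    · intro _; omega
    · intro _
      have : ((k + k : ℕ) : R) = (2 : R) * (k : ℕ) := by push_cast; rw [two_mul]
      rw [this, h2, zero_mul]
  · subst hk
    constructor
    · intro h
      exfalso
      have : ((2 * k + 1 : ℕ) : R) = (2 : R) * (k : ℕ) + 1 := by push_cast; rfl
      rw [this, h2, zero_mul, zero_add] at h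
      exact h1 h
    · intro h; omega

instance : CharP (Rq 1) 2 := charP_two (by decide) (by decide)
instance : CharP (Rq 2) 2 := charP_two (by decide) (by decide)
instance : CharP (Rq 3) 2 := charP_two (by decide) (by decide)
instance : CharP (Rq 5) 2 := charP_two (by decide) (by decide)
instance : CharP (Rq 2 × Rq 2) 2 := charP_two (by decide) (by decide)
instance : CharP (Rq 3 × Rq 2) 2 := charP_two (by decide) (by decide)
instance : CharP (Rq 3 × Rq 3) 2 := charP_two (by decide) (by decide)


theorem backward {G : Type} [CommGroup G]
    (h : (Nonempty (G ≃* Multiplicative (ZMod 1)) ∨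
     Nonempty (G ≃* Multiplicative (ZMod 2)) ∨
     Nonempty (G ≃* Multiplicative (ZMod 4)) ∨
     Nonempty (G ≃* Multiplicative (ZMod 2) × Multiplicative (ZMod 2)) ∨
     Nonempty (G ≃* Multiplicative (ZMod 4) × Multiplicative (ZMod 2)) ∨
     Nonempty (G ≃* Multiplicative (ZMod 4) × Multiplicative (ZMod 4)) ∨
     Nonempty (G ≃* Multiplicative (ZMod 8) × Multiplicative (ZMod 2)))) :
    ∃ (R : Type) (_ : Ring R), CharP R 2 ∧ Nonempty (Rˣ ≃* G) := by
  rcases h with hh | hh | hh | hh | hh | hh | hh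
  · exact ⟨Rq 1, inferInstance, inferInstance, ⟨e1.trans hh.some.symm⟩⟩
  · exact ⟨Rq 2, inferInstance, inferInstance, ⟨e2.trans hh.some.symm⟩⟩
  · exact ⟨Rq 3, inferInstance, inferInstance, ⟨e3.trans hh.some.symm⟩⟩
  · exact ⟨Rq 2 × Rq 2, inferInstance, inferInstance,
      ⟨(MulEquiv.prodUnits.trans (MulEquiv.prodCongr e2 e2)).trans hh.some.symm⟩⟩
  · exact ⟨Rq 3 × Rq 2, inferInstance, inferInstance,
      ⟨(MulEquiv.prodUnits.trans (MulEquiv.prodCongr e3 e2)).trans hh.some.symm⟩⟩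
  · exact ⟨Rq 3 × Rq 3, inferInstance, inferInstance,
      ⟨(MulEquiv.prodUnits.trans (MulEquiv.prodCongr e3 e3)).trans hh.some.symm⟩⟩
  · exact ⟨Rq 5, inferInstance, inferInstance, ⟨e5.trans hh.some.symm⟩⟩

/-- 2-torsion of `ZMod (2^m)` : a solution of `z + z = 0` is `0` or `2^(m-1)`. -/
theorem tor2 {m : ℕ} (z : ZMod (2 ^ m)) (hz : z + z = 0) :
    z = 0 ∨ z = ((2 ^ (m - 1) : ℕ) : ZMod (2 ^ m)) := by
  rcases Nat.eq_zero_or_pos m with hm | hm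
  · subst hm
    left
    haveI : Subsingleton (ZMod (2 ^ 0)) := inferInstanceAs (Subsingleton (ZMod 1))
    exact Subsingleton.elim z 0
  · haveI : NeZero (2 ^ m) := ⟨(Nat.pow_pos (by norm_num)).ne'⟩
    have hv : ((z.val + z.val : ℕ) : ZMod (2 ^ m)) = 0 := by
      push_cast [ZMod.natCast_zmod_val]
      exact hz
    have hdvd : 2 ^ m ∣ z.val + z.val := (ZMod.natCast_eq_zero_iff _ _).mp hv
    have hlt : z.val < 2 ^ m := ZMod.val_lt z
    have key : z.val = 0 ∨ z.val = 2 ^ (m - 1) := by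
      have hm2 : 2 ^ m = 2 * 2 ^ (m - 1) := by
        conv_lhs => rw [show m = 1 + (m - 1) by omega]
        rw [pow_add, pow_one]
      rcases hdvd with ⟨c, hc⟩
      rcases (by omega : c = 0 ∨ c = 1 ∨ 2 ≤ c) with rfl | rfl | h2c
      · left; omega
      · right; omega
      · exfalso
        have : 2 ^ m * 2 ≤ 2 ^ m * c := Nat.mul_le_mul_left _ h2c
        omega
    rcases key with h | h
    · left
      have hzz := ZMod.natCast_zmod_val z
      rw [← hzz, h]
      simp
    · right
      have hzz := ZMod.natCast_zmod_val z
      rw [← hzz, h]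

theorem pick {α : Type} [Zero α] {z w c : α} (hz : z = 0 ∨ z = c) (hw : w = 0 ∨ w = c)
    (h : z = c ↔ w = c) : z = w := by
  rcases hz with hz0 | hzc
  · rcases hw with hw0 | hwc
    · rw [hz0, hw0]
    · have hc : z = c := h.mpr hwc
      rw [hz0] at hc
      rw [hz0, hwc, ← hc]
  · rcases hw with hw0 | hwc
    · have hc : w = c := h.mp hzc
      rw [hw0] at hc
      rw [hzc, hw0, ← hc]
    · rw [hzc, hwc]

section Master

theorem master {A : Type} [CommRing A] [CharP A 2] {a b : ℕ}
    (ω : Aˣ ≃* Multiplicative (ZMod (2 ^ a)) × Multiplicative (ZMod (2 ^ b))) :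
    a ≤ 3 ∧ (a = 3 → b = 1) := by
  haveI : Fact (Nat.Prime 2) := ⟨Nat.prime_two⟩
  -- characteristic two facts
  have two0 : (1 + 1 : A) = 0 := by
    have h := CharP.cast_eq_zero A 2
    have h2 : ((2 : ℕ) : A) = 1 + 1 := by norm_num
    rwa [h2] at h
  have addself : ∀ r : A, r + r = 0 := by
    intro r
    have : r + r = (1 + 1) * r := by ring
    rw [this, two0, zero_mul]
  have addcancel : ∀ r s : A, r + s = 0 → r = s := by
    intro r s h
    have h2 := addself s
    calc r = r + s + s := by rw [add_assoc, h2, add_zero]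
    _ = 0 + s := by rw [h]
    _ = s := zero_add s
  -- units from square-zero elements
  have qmul : ∀ r : A, r * r = 0 → (1 + r) * (1 + r) = 1 := by
    intro r h
    have : (1 + r) * (1 + r) = 1 + ((1 + 1) * r + r * r) := by ring
    rw [this, two0, h, zero_mul, zero_add, add_zero]
  let q : {r : A // r * r = 0} → Aˣ := fun r =>
    ⟨1 + r.1, 1 + r.1, qmul r.1 r.2, qmul r.1 r.2⟩
  have qsq : ∀ r, q r * q r = 1 := fun r => Units.ext (qmul r.1 r.2)
  have qinj : Function.Injective q := by
    intro r s h
    apply Subtype.ext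
    have : (1 : A) + r.1 = 1 + s.1 := congrArg Units.val h
    exact add_left_cancel this
  -- the injection into Bool × Bool
  set c1 : ZMod (2 ^ a) := ((2 ^ (a - 1) : ℕ) : ZMod (2 ^ a)) with hc1
  set c2 : ZMod (2 ^ b) := ((2 ^ (b - 1) : ℕ) : ZMod (2 ^ b)) with hc2
  let P : {r : A // r * r = 0} → Bool × Bool := fun r =>
    (decide (Multiplicative.toAdd (ω (q r)).1 = c1),
     decide (Multiplicative.toAdd (ω (q r)).2 = c2))
  have torP : ∀ r, (Multiplicative.toAdd (ω (q r)).1 = 0 ∨ Multiplicative.toAdd (ω (q r)).1 = c1)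
      ∧ (Multiplicative.toAdd (ω (q r)).2 = 0 ∨ Multiplicative.toAdd (ω (q r)).2 = c2) := by
    intro r
    have h1 : ω (q r) * ω (q r) = 1 := by rw [← map_mul, qsq, map_one]
    have hf : (ω (q r)).1 * (ω (q r)).1 = 1 := congrArg Prod.fst h1
    have hs : (ω (q r)).2 * (ω (q r)).2 = 1 := congrArg Prod.snd h1
    constructor
    · apply tor2
      have := congrArg Multiplicative.toAdd hf
      simpa using this
    · apply tor2
      have := congrArg Multiplicative.toAdd hs
      simpa using this
  have Pinj : Function.Injective P := by
    intro r s h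
    have h1 : (decide (Multiplicative.toAdd (ω (q r)).1 = c1) : Bool)
        = decide (Multiplicative.toAdd (ω (q s)).1 = c1) := congrArg Prod.fst h
    have h2 : (decide (Multiplicative.toAdd (ω (q r)).2 = c2) : Bool)
        = decide (Multiplicative.toAdd (ω (q s)).2 = c2) := congrArg Prod.snd h
    have e1 : Multiplicative.toAdd (ω (q r)).1 = Multiplicative.toAdd (ω (q s)).1 :=
      pick (torP r).1 (torP s).1 (decide_eq_decide.mp h1)
    have e2 : Multiplicative.toAdd (ω (q r)).2 = Multiplicative.toAdd (ω (q s)).2 :=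
      pick (torP r).2 (torP s).2 (decide_eq_decide.mp h2)
    apply qinj
    apply ω.injective
    apply Prod.ext
    · exact Multiplicative.toAdd.injective e1
    · exact Multiplicative.toAdd.injective e2
  -- at most 4 square-zero elements
  have kle4 : ∀ k1 k2 k3 k4 k5 : A, k1 * k1 = 0 → k2 * k2 = 0 → k3 * k3 = 0 → k4 * k4 = 0 →
      k5 * k5 = 0 → k1 ≠ k2 → k1 ≠ k3 → k1 ≠ k4 → k1 ≠ k5 → k2 ≠ k3 → k2 ≠ k4 → k2 ≠ k5 →
      k3 ≠ k4 → k3 ≠ k5 → k4 ≠ k5 → False := by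
    intro k1 k2 k3 k4 k5 h1 h2 h3 h4 h5 d12 d13 d14 d15 d23 d24 d25 d34 d35 d45
    obtain ⟨i, j, hne, heq⟩ := Fintype.exists_ne_map_eq_of_card_lt
      (fun i : Fin 5 => P (![⟨k1, h1⟩, ⟨k2, h2⟩, ⟨k3, h3⟩, ⟨k4, h4⟩, ⟨k5, h5⟩] i))
      (by simp)
    have hv := congrArg Subtype.val (Pinj heq)
    fin_cases i <;> fin_cases j <;>
      first
      | exact hne rfl
      | exact d12 hv | exact d13 hv | exact d14 hv | exact d15 hv
      | exact d23 hv | exact d24 hv | exact d25 hv | exact d34 hv | exact d35 hv | exact d45 hv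
      | exact d12 hv.symm | exact d13 hv.symm | exact d14 hv.symm | exact d15 hv.symm
      | exact d23 hv.symm | exact d24 hv.symm | exact d25 hv.symm | exact d34 hv.symm
      | exact d35 hv.symm | exact d45 hv.symm
  -- key squaring lemma
  have sqk : ∀ x k : A, (∃ m, x ^ m = 0) → k * k = 0 → x * (x * k) = 0 := by
    intro x k hx hk
    by_contra h2k
    classical
    obtain ⟨m, hm⟩ := hx
    have hPm : x ^ m * k = 0 := by rw [hm, zero_mul]
    let Pp : ℕ → Prop := fun j => x ^ j * k = 0
    have hex : ∃ j, Pp j := ⟨m, hPm⟩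
    let m0 := Nat.find hex
    have hspec : x ^ m0 * k = 0 := Nat.find_spec hex
    have hmin : ∀ j, j < m0 → x ^ j * k ≠ 0 := fun j hj => Nat.find_min hex hj
    have hm03 : 3 ≤ m0 := by
      by_contra hlt
      push_neg at hlt
      apply h2k
      have hh : x ^ 2 * k = 0 := by
        rw [show (2 : ℕ) = (2 - m0) + m0 by omega, pow_add, mul_assoc, hspec, mul_zero]
      calc x * (x * k) = x ^ 2 * k := by ring
      _ = 0 := hh
    set k' := x ^ (m0 - 3) * k with hk'
    have e2 : x ^ 2 * k' ≠ 0 := by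
      have : x ^ 2 * k' = x ^ (m0 - 1) * k := by
        rw [hk', ← mul_assoc, ← pow_add]
        congr 2
        omega
      rw [this]
      exact hmin _ (by omega)
    have e3 : x ^ 3 * k' = 0 := by
      have : x ^ 3 * k' = x ^ m0 * k := by
        rw [hk', ← mul_assoc, ← pow_add]
        congr 2
        omega
      rw [this, hspec]
    have e4 : x ^ 4 * k' = 0 := by
      have : x ^ 4 * k' = x * (x ^ 3 * k') := by ring
      rw [this, e3, mul_zero]
    have sq0 : k' * k' = 0 := by
      have : k' * k' = x ^ (m0 - 3) * x ^ (m0 - 3) * (k * k) := by rw [hk']; ring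
      rw [this, hk, mul_zero]
    -- nonzero combinations
    have n001 : x ^ 2 * k' ≠ 0 := e2
    have n010 : x * k' ≠ 0 := by
      intro h
      apply e2
      have : x ^ 2 * k' = x * (x * k') := by ring
      rw [this, h, mul_zero]
    have n100 : k' ≠ 0 := by
      intro h
      apply e2
      rw [h, mul_zero]
    have n110 : k' + x * k' ≠ 0 := by
      intro h
      apply e2
      have h2 : x ^ 2 * (k' + x * k') = 0 := by rw [h, mul_zero]
      have : x ^ 2 * (k' + x * k') = x ^ 2 * k' + x ^ 3 * k' := by ring
      rw [this, e3, add_zero] at h2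
      exact h2
    have n101 : k' + x ^ 2 * k' ≠ 0 := by
      intro h
      apply e2
      have h2 : x ^ 2 * (k' + x ^ 2 * k') = 0 := by rw [h, mul_zero]
      have : x ^ 2 * (k' + x ^ 2 * k') = x ^ 2 * k' + x * (x ^ 3 * k') := by ring
      rw [this, e3, mul_zero, add_zero] at h2
      exact h2
    have n011 : x * k' + x ^ 2 * k' ≠ 0 := by
      intro h
      apply e2
      have h2 : x * (x * k' + x ^ 2 * k') = 0 := by rw [h, mul_zero]
      have : x * (x * k' + x ^ 2 * k') = x ^ 2 * k' + x ^ 3 * k' := by ring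
      rw [this, e3, add_zero] at h2
      exact h2
    have n111 : k' + x * k' + x ^ 2 * k' ≠ 0 := by
      intro h
      apply e2
      have h2 : x ^ 2 * (k' + x * k' + x ^ 2 * k') = 0 := by rw [h, mul_zero]
      have : x ^ 2 * (k' + x * k' + x ^ 2 * k')
          = x ^ 2 * k' + x ^ 3 * k' + x * (x ^ 3 * k') := by ring
      rw [this, e3, mul_zero, add_zero, add_zero] at h2
      exact h2
    -- differences-to-sums helper
    have neq_of_sum : ∀ r s : A, r + s ≠ 0 → r ≠ s := by
      intro r s hsum heq
      exact hsum (heq ▸ addself s)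
    -- apply kle4 to {0, k', x k', x² k', k' + x k'}
    apply kle4 0 k' (x * k') (x ^ 2 * k') (k' + x * k')
      (by ring) sq0
      (by have : (x * k') * (x * k') = x ^ 2 * (k' * k') := by ring
          rw [this, sq0, mul_zero])
      (by have : (x ^ 2 * k') * (x ^ 2 * k') = x ^ 4 * (k' * k') := by ring
          rw [this, sq0, mul_zero])
      (by have : (k' + x * k') * (k' + x * k') = (k' * k') * ((1 + x) * (1 + x)) := by ring
          rw [this, sq0, zero_mul])
      (Ne.symm n100) (Ne.symm n010) (Ne.symm n001) (Ne.symm n110)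
      (neq_of_sum _ _ n110)
      (neq_of_sum _ _ n101)
      (fun h => n010 (left_eq_add.mp h))
      (neq_of_sum _ _ n011)
      (fun h => n100 (add_eq_right.mp h.symm))
      (fun h => n111 (by rw [← h]; exact addself _))

  -- unit powers and values
  have xpow : ∀ (u : Aˣ) (n : ℕ), ((u : A) + 1) ^ (2 ^ n) = ((u ^ (2 ^ n) : Aˣ) : A) + 1 := by
    intro u n
    have hp := add_pow_char_pow ((u : A)) (1 : A) 2 n
    rw [one_pow] at hp
    rw [hp, Units.val_pow_eq_pow_val]
  have unit_ne : ∀ u : Aˣ, u ≠ 1 → ((u : A) + 1) ≠ 0 := by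
    intro u hu h
    apply hu
    apply Units.ext
    have h1 : (u : A) = -1 := eq_neg_of_add_eq_zero_left h
    rw [CharTwo.neg_eq] at h1
    simpa using h1
  have unit_eq : ∀ u : Aˣ, u = 1 → ((u : A) + 1) = 0 := by
    intro u hu
    rw [hu]
    simpa using two0
  -- powers of special units on the group side
  have upow1 : ∀ (t : ZMod (2 ^ a)) (n : ℕ),
      (ω.symm (Multiplicative.ofAdd t, 1)) ^ n
        = ω.symm (Multiplicative.ofAdd (n • t), 1) := by
    intro t n
    rw [← map_pow]
    congr 1
    apply Prod.ext
    · rw [Prod.pow_fst, ofAdd_nsmul]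
    · rw [Prod.pow_snd, one_pow]
  have upow2 : ∀ (t : ZMod (2 ^ b)) (n : ℕ),
      (ω.symm (1, Multiplicative.ofAdd t)) ^ n
        = ω.symm (1, Multiplicative.ofAdd (n • t)) := by
    intro t n
    rw [← map_pow]
    congr 1
    apply Prod.ext
    · rw [Prod.pow_fst, one_pow]
    · rw [Prod.pow_snd, ofAdd_nsmul]
  have usmul1 : ∀ (n m : ℕ), (n • (((m : ℕ) : ZMod (2 ^ a))) : ZMod (2 ^ a)) = ((n * m : ℕ) : ZMod (2 ^ a)) := by
    intro n m
    rw [nsmul_eq_mul]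
    push_cast
    ring
  have usmul2 : ∀ (n m : ℕ), (n • (((m : ℕ) : ZMod (2 ^ b))) : ZMod (2 ^ b)) = ((n * m : ℕ) : ZMod (2 ^ b)) := by
    intro n m
    rw [nsmul_eq_mul]
    push_cast
    ring
  have uone1 : ∀ (t : ZMod (2 ^ a)), t = 0 → ω.symm (Multiplicative.ofAdd t, 1) = 1 := by
    intro t ht
    rw [ht, ofAdd_zero]
    exact ω.symm.map_one
  have une1 : ∀ (t : ZMod (2 ^ a)), t ≠ 0 → ω.symm (Multiplicative.ofAdd t, 1) ≠ 1 := by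
    intro t ht h
    apply ht
    have h2 : (Multiplicative.ofAdd t, (1 : Multiplicative (ZMod (2 ^ b)))) = 1 := by
      apply ω.symm.injective
      rw [h, ω.symm.map_one]
    have h3 : Multiplicative.ofAdd t = 1 := congrArg Prod.fst h2
    have h4 := congrArg Multiplicative.toAdd h3
    simpa using h4
  have cast_ne : ∀ c : ℕ, 0 < c → c < 2 ^ a → ((c : ℕ) : ZMod (2 ^ a)) ≠ 0 := by
    intro c hc hlt h
    have hdvd := (ZMod.natCast_eq_zero_iff _ _).mp h
    have := Nat.le_of_dvd hc hdvd
    omega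
  -- PART 1 : a ≤ 3
  have part1 : a ≤ 3 := by
    by_contra hgt
    push_neg at hgt
    have ha4 : 4 ≤ a := hgt
    set t : ZMod (2 ^ a) := ((2 ^ (a - 4) : ℕ) : ZMod (2 ^ a)) with hta
    set u : Aˣ := ω.symm (Multiplicative.ofAdd t, 1) with hu
    set x : A := (u : A) + 1 with hx
    have h16 : u ^ 16 = 1 := by
      rw [hu, upow1, usmul1]
      apply uone1
      rw [show 16 * 2 ^ (a - 4) = 2 ^ a by
        rw [show (16 : ℕ) = 2 ^ 4 by norm_num, ← pow_add]
        congr 1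
        omega]
      exact ZMod.natCast_self _
    have h8 : u ^ 8 ≠ 1 := by
      rw [hu, upow1, usmul1]
      apply une1
      rw [show 8 * 2 ^ (a - 4) = 2 ^ (a - 1) by
        rw [show (8 : ℕ) = 2 ^ 3 by norm_num, ← pow_add]
        congr 1
        omega]
      apply cast_ne
      · positivity
      · have h2 : 2 ^ a = 2 * 2 ^ (a - 1) := by
          rw [← pow_succ']
          congr 1
          omega
        have h3 : 0 < 2 ^ (a - 1) := Nat.pow_pos (by norm_num)
        omega
    have hx16 : x ^ 16 = 0 := by
      have h := xpow u 4
      norm_num at h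
      rw [hx, h, ← Units.val_pow_eq_pow_val]
      exact unit_eq _ h16
    have hx8 : x ^ 8 ≠ 0 := by
      have h := xpow u 3
      norm_num at h
      rw [hx, h, ← Units.val_pow_eq_pow_val]
      exact unit_ne _ h8
    have hk16 : x ^ 8 * x ^ 8 = 0 := by
      have h : x ^ 8 * x ^ 8 = x ^ 16 := by ring
      rw [h, hx16]
    have h10 : x ^ 10 = 0 := by
      have h := sqk x (x ^ 8) ⟨16, hx16⟩ hk16
      calc x ^ 10 = x * (x * x ^ 8) := by ring
      _ = 0 := h
    have h5sq : x ^ 5 * x ^ 5 = 0 := by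
      have h : x ^ 5 * x ^ 5 = x ^ 10 := by ring
      rw [h, h10]
    have h7 : x ^ 7 = 0 := by
      have h := sqk x (x ^ 5) ⟨16, hx16⟩ h5sq
      calc x ^ 7 = x * (x * x ^ 5) := by ring
      _ = 0 := h
    apply hx8
    calc x ^ 8 = x * x ^ 7 := by ring
    _ = 0 := by rw [h7, mul_zero]
  -- PART 2 : a = 3 → b = 1
  have part2 : a = 3 → b = 1 := by
    intro ha3
    subst ha3
    -- the order-8 unit
    set u : Aˣ := ω.symm (Multiplicative.ofAdd (1 : ZMod (2 ^ 3)), 1) with hu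
    set x : A := (u : A) + 1 with hx
    have h8 : u ^ 8 = 1 := by
      rw [hu, upow1]
      apply uone1
      have : (8 : ℕ) • (1 : ZMod (2 ^ 3)) = ((8 * 1 : ℕ) : ZMod (2 ^ 3)) := by
        rw [← usmul1 8 1]
        norm_num
      rw [this]
      rw [show (8 * 1 : ℕ) = 2 ^ 3 by norm_num]
      exact ZMod.natCast_self _
    have h4 : u ^ 4 ≠ 1 := by
      rw [hu, upow1]
      apply une1
      have : (4 : ℕ) • (1 : ZMod (2 ^ 3)) = ((4 * 1 : ℕ) : ZMod (2 ^ 3)) := by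
        rw [← usmul1 4 1]
        norm_num
      rw [this]
      apply cast_ne <;> norm_num
    have hx8 : x ^ 8 = 0 := by
      have h := xpow u 3
      norm_num at h
      rw [hx, h, ← Units.val_pow_eq_pow_val]
      exact unit_eq _ h8
    have hx4 : x ^ 4 ≠ 0 := by
      have h := xpow u 2
      norm_num at h
      rw [hx, h, ← Units.val_pow_eq_pow_val]
      exact unit_ne _ h4
    have s44 : x ^ 4 * x ^ 4 = 0 := by
      have h : x ^ 4 * x ^ 4 = x ^ 8 := by ring
      rw [h, hx8]
    have h6 : x ^ 6 = 0 := by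
      have h := sqk x (x ^ 4) ⟨8, hx8⟩ s44
      calc x ^ 6 = x * (x * x ^ 4) := by ring
      _ = 0 := h
    have s33 : x ^ 3 * x ^ 3 = 0 := by
      have h : x ^ 3 * x ^ 3 = x ^ 6 := by ring
      rw [h, h6]
    have h5 : x ^ 5 = 0 := by
      have h := sqk x (x ^ 3) ⟨8, hx8⟩ s33
      calc x ^ 5 = x * (x * x ^ 3) := by ring
      _ = 0 := h
    have h7 : x ^ 7 = 0 := by
      calc x ^ 7 = x ^ 2 * x ^ 5 := by ring
      _ = 0 := by rw [h5, mul_zero]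
    have sSS : (x ^ 3 + x ^ 4) * (x ^ 3 + x ^ 4) = 0 := by
      linear_combination h6 + 2 * h7 + hx8
    have dn3 : x ^ 3 ≠ 0 := by
      intro h
      apply hx4
      calc x ^ 4 = x * x ^ 3 := by ring
      _ = 0 := by rw [h, mul_zero]
    have d34 : x ^ 3 ≠ x ^ 4 := by
      intro h
      apply hx4
      calc x ^ 4 = x * x ^ 3 := by ring
      _ = x * x ^ 4 := by rw [h]
      _ = x ^ 5 := by ring
      _ = 0 := h5
    have dS0 : x ^ 3 + x ^ 4 ≠ 0 := by
      intro h
      apply hx4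
      have h2 : x * (x ^ 3 + x ^ 4) = 0 := by rw [h, mul_zero]
      linear_combination h2 - h5
    have dS3 : x ^ 3 + x ^ 4 ≠ x ^ 3 := by
      intro h
      exact hx4 (by linear_combination h)
    have dS4 : x ^ 3 + x ^ 4 ≠ x ^ 4 := by
      intro h
      exact dn3 (by linear_combination h)
    -- rule out b = 0
    have hb0 : b ≠ 0 := by
      intro hb
      subst hb
      haveI : Subsingleton (Multiplicative (ZMod (2 ^ 0))) :=
        ⟨fun x y => Multiplicative.toAdd.injective (Subsingleton.elim (α := ZMod 1) _ _)⟩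
      set w1 : Aˣ := q ⟨x ^ 3, s33⟩ with hw1
      set w2 : Aˣ := q ⟨x ^ 4, s44⟩ with hw2
      have key : ∀ (r : A) (hr : r * r = 0), r ≠ 0 →
          Multiplicative.toAdd (ω (q ⟨r, hr⟩)).1 = c1 := by
        intro r hr hrne
        rcases (torP ⟨r, hr⟩).1 with h | h
        · exfalso
          apply hrne
          have h1 : (ω (q ⟨r, hr⟩)).1 = 1 := by
            have := congrArg Multiplicative.ofAdd h
            simpa using this
          have h2 : ω (q ⟨r, hr⟩) = 1 := by
            apply Prod.ext
            · simpa using h1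
            · exact Subsingleton.elim _ _
          have h3 : q ⟨r, hr⟩ = 1 := by
            apply ω.injective
            rw [h2, map_one]
          have h4 : (1 : A) + r = 1 := congrArg Units.val h3
          have := add_left_cancel (h4.trans (add_zero 1).symm)
          exact this
        · exact h
      have k3 := key (x ^ 3) s33 dn3
      have k4 := key (x ^ 4) s44 hx4
      have heq : (ω (q ⟨x ^ 3, s33⟩)) = (ω (q ⟨x ^ 4, s44⟩)) := by
        apply Prod.ext
        · apply Multiplicative.toAdd.injective
          rw [k3, k4]
        · exact Subsingleton.elim _ _
      have := qinj (ω.injective heq)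
      exact d34 (congrArg Subtype.val this)
    -- rule out b ≥ 2
    have hb2 : ¬ (2 ≤ b) := by
      intro hb
      set tb : ZMod (2 ^ b) := ((2 ^ (b - 2) : ℕ) : ZMod (2 ^ b)) with htb
      set v : Aˣ := ω.symm (1, Multiplicative.ofAdd tb) with hv
      set y : A := (v : A) + 1 with hy
      have hv4 : v ^ 4 = 1 := by
        rw [hv, upow2, htb, usmul2]
        rw [show 4 * 2 ^ (b - 2) = 2 ^ b by
          rw [show (4 : ℕ) = 2 ^ 2 by norm_num, ← pow_add]
          congr 1
          omega]
        rw [ZMod.natCast_self, ofAdd_zero]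
        exact ω.symm.map_one
      have hsnd2 : (2 : ℕ) • tb ≠ 0 := by
        rw [htb, usmul2]
        rw [show 2 * 2 ^ (b - 2) = 2 ^ (b - 1) by
          rw [← pow_succ']
          congr 1
          omega]
        intro h
        have hdvd := (ZMod.natCast_eq_zero_iff _ _).mp h
        have hle := Nat.le_of_dvd (Nat.pow_pos (by norm_num)) hdvd
        have h2 : 2 ^ b = 2 * 2 ^ (b - 1) := by
          rw [← pow_succ']
          congr 1
          omega
        have h3 : 0 < 2 ^ (b - 1) := Nat.pow_pos (by norm_num)
        omega
      have hv2 : v ^ 2 ≠ 1 := by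
        rw [hv, upow2]
        intro h
        apply hsnd2
        have h2 : ((1 : Multiplicative (ZMod (2 ^ 3))), Multiplicative.ofAdd ((2:ℕ) • tb)) = 1 := by
          apply ω.symm.injective
          rw [h, ω.symm.map_one]
        have h3 := congrArg Prod.snd h2
        have h4 := congrArg Multiplicative.toAdd h3
        simpa using h4
      have hy4 : y ^ 4 = 0 := by
        have h := xpow v 2
        norm_num at h
        rw [hy, h, ← Units.val_pow_eq_pow_val]
        exact unit_eq _ hv4
      have hy2 : y ^ 2 ≠ 0 := by
        have h := xpow v 1
        norm_num at h
        rw [hy, h, ← Units.val_pow_eq_pow_val]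
        exact unit_ne _ hv2
      have sy : y ^ 2 * y ^ 2 = 0 := by
        have h : y ^ 2 * y ^ 2 = y ^ 4 := by ring
        rw [h, hy4]
      -- y² ≠ x⁴ since v² ≠ u⁴
      have ne4 : y ^ 2 ≠ x ^ 4 := by
        intro h
        apply hv2
        have hu4 : ((u ^ 4 : Aˣ) : A) = x ^ 4 + 1 := by
          have hh := xpow u 2
          norm_num at hh
          rw [Units.val_pow_eq_pow_val]
          have h2 : x ^ 4 = (u : A) ^ 4 + 1 := by rw [hx]; exact hh
          linear_combination -h2 - two0
        have hv2v : ((v ^ 2 : Aˣ) : A) = y ^ 2 + 1 := by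
          have hh := xpow v 1
          norm_num at hh
          rw [Units.val_pow_eq_pow_val]
          have h2 : y ^ 2 = (v : A) ^ 2 + 1 := by rw [hy]; exact hh
          linear_combination -h2 - two0
        have hval : ((v ^ 2 : Aˣ) : A) = ((u ^ 4 : Aˣ) : A) := by
          rw [hv2v, hu4, h]
        have huv : v ^ 2 = u ^ 4 := Units.ext hval
        -- group side contradiction
        have hL : v ^ 2 = ω.symm (1, Multiplicative.ofAdd ((2:ℕ) • tb)) := by
          rw [hv, upow2]
        have hR : u ^ 4 = ω.symm (Multiplicative.ofAdd ((4:ℕ) • (1 : ZMod (2 ^ 3))), 1) := by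
          rw [hu, upow1]
        rw [hL, hR] at huv
        have h2 := ω.symm.injective huv
        have h3 := congrArg Prod.snd h2
        have h4 := congrArg Multiplicative.toAdd h3
        exfalso
        apply hsnd2
        simpa using h4
      -- y² lies in {0, x³, x⁴, x³+x⁴}
      have hymem : y ^ 2 = x ^ 3 ∨ y ^ 2 = x ^ 3 + x ^ 4 := by
        by_contra hny
        push_neg at hny
        exact kle4 0 (x ^ 3) (x ^ 4) (x ^ 3 + x ^ 4) (y ^ 2)
          (by ring) s33 s44 sSS sy
          (Ne.symm dn3) (Ne.symm hx4) (Ne.symm dS0) (Ne.symm hy2)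
          d34 (Ne.symm dS3) (Ne.symm hny.1) (Ne.symm dS4) ne4.symm
          (fun h => hny.2 h.symm)
      -- x*y lies in {0, x³, x⁴, x³+x⁴}
      have hxy2 : (x * y) * (x * y) = 0 := by
        rcases hymem with hc | hc
        · linear_combination x ^ 2 * hc + h5
        · linear_combination x ^ 2 * hc + h5 + h6
      have hxymem : x * y = 0 ∨ x * y = x ^ 3 ∨ x * y = x ^ 4 ∨ x * y = x ^ 3 + x ^ 4 := by
        by_contra hny
        push_neg at hny
        exact kle4 0 (x ^ 3) (x ^ 4) (x ^ 3 + x ^ 4) (x * y)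
          (by ring) s33 s44 sSS hxy2
          (Ne.symm dn3) (Ne.symm hx4) (Ne.symm dS0) (Ne.symm hny.1)
          d34 (Ne.symm dS3) (fun h => hny.2.1 h.symm) (Ne.symm dS4)
          (fun h => hny.2.2.1 h.symm) (fun h => hny.2.2.2 h.symm)
      -- final contradiction : x⁴ = (x*y)*y = 0
      have key : x ^ 4 = (x * y) * y := by
        rcases hymem with hc | hc
        · linear_combination (-x) * hc
        · linear_combination (-x) * hc - h5
      have hz : (x * y) * y = 0 := by
        rcases hxymem with hm | hm | hm | hm
        · rw [hm, zero_mul]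
        · linear_combination (y + x ^ 2) * hm + h5
        · linear_combination (y + x ^ 3) * hm + h7
        · linear_combination (y + x ^ 2 + x ^ 3) * hm + h5 + 2 * h6 + h7
      exact hx4 (key.trans hz)
    omega
  exact ⟨part1, part2⟩

end Master

theorem forward_main {G : Type} [CommGroup G] {a b : ℕ}
    (ψ : G ≃* Multiplicative (ZMod (2 ^ a)) × Multiplicative (ZMod (2 ^ b)))
    (R : Type) (rinst : Ring R) (hchar : CharP R 2) (φ : Rˣ ≃* G) :
    (Nonempty (G ≃* Multiplicative (ZMod 1)) ∨
     Nonempty (G ≃* Multiplicative (ZMod 2)) ∨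
     Nonempty (G ≃* Multiplicative (ZMod 4)) ∨
     Nonempty (G ≃* Multiplicative (ZMod 2) × Multiplicative (ZMod 2)) ∨
     Nonempty (G ≃* Multiplicative (ZMod 4) × Multiplicative (ZMod 2)) ∨
     Nonempty (G ≃* Multiplicative (ZMod 4) × Multiplicative (ZMod 4)) ∨
     Nonempty (G ≃* Multiplicative (ZMod 8) × Multiplicative (ZMod 2))) := by
  -- commutative subring generated by the units
  have hc : ∀ s ∈ Set.range (Units.val : Rˣ → R), ∀ t ∈ Set.range (Units.val : Rˣ → R),
      s * t = t * s := by
    rintro s ⟨u, rfl⟩ t ⟨v, rfl⟩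
    have h : u * v = v * u := φ.injective (by rw [map_mul, map_mul, mul_comm])
    calc (u : R) * (v : R) = ((u * v : Rˣ) : R) := (Units.val_mul u v).symm
    _ = ((v * u : Rˣ) : R) := by rw [h]
    _ = (v : R) * (u : R) := Units.val_mul v u
  set A : Subring R := Subring.closure (Set.range (Units.val : Rˣ → R)) with hA
  letI : CommRing A := Subring.closureCommRingOfComm hc
  have h1R : (1 : R) ≠ 0 := by
    intro hh
    have h2 := (CharP.cast_eq_zero_iff R 2 1).mp (by simpa using hh)
    norm_num at h2
  haveI : CharP (↥A) 2 := by
    apply charP_two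
    · apply Subtype.ext
      have h2 : (2 : ↥A) = 1 + 1 := by norm_num
      rw [h2]
      push_cast
      have h2R : (1 : R) + 1 = 0 := by
        have hh := CharP.cast_eq_zero R 2
        rw [Nat.cast_ofNat] at hh
        rw [one_add_one_eq_two]
        exact hh
      simpa using h2R
    · intro h
      apply h1R
      simpa using congrArg Subtype.val h
  -- units of A are the units of R
  have memA : ∀ u : Rˣ, (u : R) ∈ A := fun u => Subring.subset_closure ⟨u, rfl⟩
  have hbij : Function.Bijective (Units.map (A.subtype : ↥A →* R)) := by
    constructor
    · intro u v h
      apply Units.ext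
      apply Subtype.ext
      exact congrArg Units.val h
    · intro u
      refine ⟨⟨⟨(u : R), memA u⟩, ⟨((u⁻¹ : Rˣ) : R), memA u⁻¹⟩, ?_, ?_⟩, ?_⟩
      · exact Subtype.ext (u.mul_inv)
      · exact Subtype.ext (u.inv_mul)
      · exact Units.ext rfl
  set ωA : (↥A)ˣ ≃* Multiplicative (ZMod (2 ^ a)) × Multiplicative (ZMod (2 ^ b)) :=
    (MulEquiv.ofBijective _ hbij).trans (φ.trans ψ) with hωA
  obtain ⟨ha3, hab⟩ := master ωA
  obtain ⟨hb3, hba⟩ := master (ωA.trans MulEquiv.prodComm)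
  haveI : Unique (Multiplicative (ZMod (2 ^ 0))) :=
    ⟨⟨1⟩, fun x => Multiplicative.toAdd.injective (Subsingleton.elim (α := ZMod 1) _ _)⟩
  clear hωA
  clear ωA
  interval_cases a
  · interval_cases b
    · exact Or.inl ⟨ψ.trans MulEquiv.prodUnique⟩
    · exact Or.inr (Or.inl ⟨ψ.trans MulEquiv.uniqueProd⟩)
    · exact Or.inr (Or.inr (Or.inl ⟨ψ.trans MulEquiv.uniqueProd⟩))
    · exact absurd (hba rfl) (by norm_num)
  · interval_cases b
    · exact Or.inr (Or.inl ⟨ψ.trans MulEquiv.prodUnique⟩)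
    · exact Or.inr (Or.inr (Or.inr (Or.inl ⟨ψ⟩)))
    · exact Or.inr (Or.inr (Or.inr (Or.inr (Or.inl ⟨ψ.trans MulEquiv.prodComm⟩))))
    · exact Or.inr (Or.inr (Or.inr (Or.inr (Or.inr (Or.inr ⟨ψ.trans MulEquiv.prodComm⟩)))))
  · interval_cases b
    · exact Or.inr (Or.inr (Or.inl ⟨ψ.trans MulEquiv.prodUnique⟩))
    · exact Or.inr (Or.inr (Or.inr (Or.inr (Or.inl ⟨ψ⟩))))
    · exact Or.inr (Or.inr (Or.inr (Or.inr (Or.inr (Or.inl ⟨ψ⟩)))))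
    · exact absurd (hba rfl) (by norm_num)
  · interval_cases b
    · exact absurd (hab rfl) (by norm_num)
    · exact Or.inr (Or.inr (Or.inr (Or.inr (Or.inr (Or.inr ⟨ψ⟩)))))
    · exact absurd (hab rfl) (by norm_num)
    · exact absurd (hab rfl) (by norm_num)


end Fc2


/-- A finite abelian 2-group of rank at most 2 is the group of units of a ring of
characteristic 2 iff it is one of `C₁, C₂, C₄, C₂ × C₂, C₄ × C₂, C₄ × C₄, C₈ × C₂`. -/
theorem fuchs_char_two_rank_le_two (G : Type) [CommGroup G] [Fintype G]
    (hG : ∃ e : ℕ, Fintype.card G = 2 ^ e)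
    (hrank : ∃ a b : ℕ,
      Nonempty (G ≃* Multiplicative (ZMod (2 ^ a)) × Multiplicative (ZMod (2 ^ b)))) :
    (∃ (R : Type) (_ : Ring R), CharP R 2 ∧ Nonempty (Rˣ ≃* G)) ↔
    (Nonempty (G ≃* Multiplicative (ZMod 1)) ∨
     Nonempty (G ≃* Multiplicative (ZMod 2)) ∨
     Nonempty (G ≃* Multiplicative (ZMod 4)) ∨
     Nonempty (G ≃* Multiplicative (ZMod 2) × Multiplicative (ZMod 2)) ∨
     Nonempty (G ≃* Multiplicative (ZMod 4) × Multiplicative (ZMod 2)) ∨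
     Nonempty (G ≃* Multiplicative (ZMod 4) × Multiplicative (ZMod 4)) ∨
     Nonempty (G ≃* Multiplicative (ZMod 8) × Multiplicative (ZMod 2))) := by
  obtain ⟨a, b, hψ⟩ := hrank
  constructor
  · rintro ⟨R, rinst, hchar, hφ⟩
    exact Fc2.forward_main hψ.some R rinst hchar hφ.some
  · exact Fc2.backward
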